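/- Let tau ≥ 0 and K, b, mu, mu1 > 0. Suppose R, P2 : [−tau, ∞) → ℝ are continuous, differentiable on (0,∞), nonnegative on [−tau, 0], and satisfy for all t > 0: R'(t) = R(t)·(1 − R(t)/K) − b·R(t)·P2(t)/(1 + R(t)) and P2'(t) = −mu·P2(t) + b·e^{−mu1·tau}·R(t−tau)·P2(t−tau)/(1 + R(t−tau)). Then R(t) ≥ 0 and P2(t) ≥ 0 for all t ≥ 0. -/

import Mathlib

open Set Filter Topology

/-- Grönwall-type lemma: if `|f'| ≤ C|f|` on `(a,c)` and `f a = 0`, then `f ≡ 0` on `[a,c]`. -/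
lemma gronwall_zero' {f f' : ℝ → ℝ} {C a c : ℝ} (hC : 0 ≤ C)
    (hf : ContinuousOn f (Set.Icc a c))
    (hd : ∀ t ∈ Set.Ioo a c, HasDerivAt f (f' t) t)
    (hbound : ∀ t ∈ Set.Ioo a c, |f' t| ≤ C * |f t|)
    (ha : f a = 0) : ∀ t ∈ Set.Icc a c, f t = 0 := by
  intro t ht
  rcases eq_or_lt_of_le ht.1 with rfl | hat
  · exact ha
  -- show |f t| < ε for every ε > 0
  have key : ∀ ε > (0:ℝ), |f t| < ε := by
    intro ε hε
    set E0 : ℝ := Real.exp (C * (c - a)) with hE0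
    have hE0pos : 0 < E0 := Real.exp_pos _
    -- choose a' ∈ (a, t] with |f a'| < ε / E0
    have hcw : ContinuousWithinAt f (Set.Icc a c) a :=
      hf a ⟨le_refl _, le_trans (le_of_lt hat) ht.2⟩
    have hcw' : Filter.Tendsto f (𝓝[Set.Ioc a t] a) (𝓝 (f a)) :=
      hcw.mono_left (nhdsWithin_mono _ (fun x hx => ⟨le_of_lt hx.1, le_trans hx.2 ht.2⟩))
    have hev : ∀ᶠ s in 𝓝[Set.Ioc a t] a, |f s| < ε / E0 := by
      have : ∀ᶠ s in 𝓝[Set.Ioc a t] a, f s ∈ Metric.ball (f a) (ε / E0) :=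
        hcw' (Metric.ball_mem_nhds _ (div_pos hε hE0pos))
      filter_upwards [this] with s hs
      rw [ha] at hs
      simpa [Real.dist_eq] using hs
    haveI : (𝓝[Set.Ioc a t] a).NeBot := left_nhdsWithin_Ioc_neBot hat
    obtain ⟨a', ha'small, haa', ha't⟩ := (hev.and eventually_mem_nhdsWithin).exists
    -- apply mathlib Grönwall on [a', t]
    have hsub : Set.Icc a' t ⊆ Set.Icc a c :=
      Set.Icc_subset_Icc (le_of_lt haa') ht.2
    have hG := norm_le_gronwallBound_of_norm_deriv_right_le (f := f) (f' := f')
      (δ := |f a'|) (K := C) (ε := 0) (a := a') (b := t)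
      (hf.mono hsub)
      (fun x hx => (hd x ⟨lt_of_lt_of_le haa' hx.1, lt_of_lt_of_le hx.2 ht.2⟩).hasDerivWithinAt)
      (le_refl _)
      (fun x hx => by
        simpa using hbound x ⟨lt_of_lt_of_le haa' hx.1, lt_of_lt_of_le hx.2 ht.2⟩)
    have h1 : ‖f t‖ ≤ gronwallBound (|f a'|) C 0 (t - a') :=
      hG t ⟨ha't, le_refl _⟩
    rw [gronwallBound_ε0] at h1
    have h2 : |f a'| * Real.exp (C * (t - a')) ≤ |f a'| * E0 := by
      apply mul_le_mul_of_nonneg_left _ (abs_nonneg _)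
      exact Real.exp_le_exp.mpr (mul_le_mul_of_nonneg_left (by linarith [ht.2]) hC)
    calc |f t| = ‖f t‖ := rfl
      _ ≤ |f a'| * Real.exp (C * (t - a')) := h1
      _ ≤ |f a'| * E0 := h2
      _ < (ε / E0) * E0 := by
          apply mul_lt_mul_of_pos_right ha'small hE0pos
      _ = ε := div_mul_cancel₀ _ (ne_of_gt hE0pos)
  by_contra hne
  exact lt_irrefl _ (key (|f t|) (abs_pos.mpr hne))

/-- If `f' ≥ -μ f` on `(a,c)` and `f a ≥ 0`, then `f ≥ 0` on `[a,c]`. -/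
lemma nonneg_of_deriv_ge_neg_mul {f f' : ℝ → ℝ} {mu a c : ℝ}
    (hf : ContinuousOn f (Set.Icc a c))
    (hd : ∀ t ∈ Set.Ioo a c, HasDerivAt f (f' t) t)
    (hbound : ∀ t ∈ Set.Ioo a c, -mu * f t ≤ f' t)
    (ha : 0 ≤ f a) : ∀ t ∈ Set.Icc a c, 0 ≤ f t := by
  intro t ht
  set g : ℝ → ℝ := fun s => Real.exp (mu * s) * f s with hg
  have hgd : ∀ x ∈ Set.Ioo a c, HasDerivAt g
      (Real.exp (mu * x) * mu * f x + Real.exp (mu * x) * f' x) x := by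
    intro x hx
    exact (((hasDerivAt_id x).const_mul mu).exp.mul (hd x hx)).congr_deriv (by simp only [id_eq, mul_one])
  have hmono : MonotoneOn g (Set.Icc a c) := by
    apply monotoneOn_of_deriv_nonneg (convex_Icc a c)
    · exact (Real.continuous_exp.comp (continuous_const.mul continuous_id)).continuousOn.mul hf
    · intro x hx
      rw [interior_Icc] at hx
      exact (hgd x hx).differentiableAt.differentiableWithinAt
    · intro x hx
      rw [interior_Icc] at hx
      rw [(hgd x hx).deriv]
      have h1 := hbound x hx
      have h2 : (0:ℝ) < Real.exp (mu * x) := Real.exp_pos _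
      nlinarith
  have h1 : g a ≤ g t := hmono ⟨le_refl _, le_trans ht.1 ht.2⟩ ht ht.1
  have h2 : 0 ≤ g a := mul_nonneg (le_of_lt (Real.exp_pos _)) ha
  have h3 : 0 ≤ g t := le_trans h2 h1
  have h4 : (0:ℝ) < Real.exp (mu * t) := Real.exp_pos _
  exact nonneg_of_mul_nonneg_right (by simpa [hg] using h3) h4

/-- Positivity of solutions of the delayed Rosenzweig–MacArthur model:
    solutions with nonnegative continuous initial data on `[−τ,0]` remain
    nonnegative for all `t ≥ 0`. -/
theorem delayed_rosenzweig_macarthur_positivity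
    (tau K b mu mu1 : ℝ) (htau : 0 ≤ tau) (hK : 0 < K) (hb : 0 < b)
    (hmu : 0 < mu) (hmu1 : 0 < mu1)
    (R P2 : ℝ → ℝ)
    (hRc : ContinuousOn R (Set.Ici (-tau)))
    (hPc : ContinuousOn P2 (Set.Ici (-tau)))
    (hRnn : ∀ t ∈ Set.Icc (-tau) (0:ℝ), 0 ≤ R t)
    (hPnn : ∀ t ∈ Set.Icc (-tau) (0:ℝ), 0 ≤ P2 t)
    (hR : ∀ t > (0:ℝ), HasDerivAt R
      (R t * (1 - R t / K) - b * R t * P2 t / (1 + R t)) t)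
    (hP : ∀ t > (0:ℝ), HasDerivAt P2
      (-mu * P2 t + b * Real.exp (-mu1 * tau) * R (t - tau) * P2 (t - tau)
        / (1 + R (t - tau))) t) :
    ∀ t ≥ (0:ℝ), 0 ≤ R t ∧ 0 ≤ P2 t := by
  by_contra hcon
  push_neg at hcon
  set S : Set ℝ := {t | 0 ≤ t ∧ (R t < 0 ∨ P2 t < 0)} with hSdef
  have hSne : S.Nonempty := by
    obtain ⟨t, ht0, hbad⟩ := hcon
    rcases lt_or_ge (R t) 0 with h | h
    · exact ⟨t, ht0, Or.inl h⟩
    · exact ⟨t, ht0, Or.inr (hbad h)⟩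
  have hbdd : BddBelow S := ⟨0, fun s hs => hs.1⟩
  set T := sInf S with hT
  have hT0 : 0 ≤ T := le_csInf hSne (fun s hs => hs.1)
  have hTlb : ∀ s ∈ S, T ≤ s := fun s hs => csInf_le hbdd hs
  have htau' : -tau ≤ 0 := neg_nonpos.mpr htau
  -- nonnegativity strictly before T
  have hpre : ∀ t, -tau ≤ t → t < T → 0 ≤ R t ∧ 0 ≤ P2 t := by
    intro t h1 h2
    rcases le_or_gt t 0 with h | h
    · exact ⟨hRnn t ⟨h1, h⟩, hPnn t ⟨h1, h⟩⟩
    · by_contra hc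
      rw [not_and_or] at hc
      push_neg at hc
      have : t ∈ S := ⟨le_of_lt h, hc⟩
      exact absurd (hTlb t this) (not_le.mpr h2)
  -- nonnegativity at T by continuity from the left
  have hlim : ∀ (f : ℝ → ℝ), ContinuousOn f (Set.Ici (-tau)) → 0 < T →
      (∀ t, -tau ≤ t → t < T → 0 ≤ f t) → 0 ≤ f T := by
    intro f hfc hTpos hfnn
    have hTm : T ∈ Set.Ici (-tau) := le_trans htau' hT0
    have hcw : Filter.Tendsto f (𝓝[Set.Ico 0 T] T) (𝓝 (f T)) :=
      (hfc T hTm).mono_left (nhdsWithin_mono _ (fun x hx => le_trans htau' hx.1))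
    haveI : (𝓝[Set.Ico 0 T] T).NeBot := right_nhdsWithin_Ico_neBot hTpos
    exact ge_of_tendsto hcw (eventually_of_mem self_mem_nhdsWithin
      (fun s hs => hfnn s (le_trans htau' hs.1) hs.2))
  have hRT : 0 ≤ R T := by
    rcases eq_or_lt_of_le hT0 with h0 | hTpos
    · exact hRnn T ⟨by linarith, by linarith⟩
    · exact hlim R hRc hTpos (fun t h1 h2 => (hpre t h1 h2).1)
  have hPT : 0 ≤ P2 T := by
    rcases eq_or_lt_of_le hT0 with h0 | hTpos
    · exact hPnn T ⟨by linarith, by linarith⟩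
    · exact hlim P2 hPc hTpos (fun t h1 h2 => (hpre t h1 h2).2)
  -- nonnegativity up to and including T
  have hnnT : ∀ t, -tau ≤ t → t ≤ T → 0 ≤ R t ∧ 0 ≤ P2 t := by
    intro t h1 h2
    rcases eq_or_lt_of_le h2 with rfl | h2'
    · exact ⟨hRT, hPT⟩
    · exact hpre t h1 h2'
  -- one-sided continuity at T
  have hcont_right : ∀ (f : ℝ → ℝ), ContinuousOn f (Set.Ici (-tau)) → ∀ ε > (0:ℝ),
      ∃ δ > (0:ℝ), ∀ s, T ≤ s → s < T + δ → |f s - f T| < ε := by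
    intro f hfc ε hε
    have hTm : T ∈ Set.Ici (-tau) := le_trans htau' hT0
    have hcw : Filter.Tendsto f (𝓝[Set.Ici T] T) (𝓝 (f T)) :=
      (hfc T hTm).mono_left (nhdsWithin_mono _ (fun x hx => le_trans (le_trans htau' hT0) hx))
    have hev : ∀ᶠ s in 𝓝[Set.Ici T] T, |f s - f T| < ε := by
      have := hcw (Metric.ball_mem_nhds (f T) hε)
      filter_upwards [this] with s hs
      simpa [Real.dist_eq] using hs
    obtain ⟨u, hu, husub⟩ := (nhdsGE_basis_Ico T).mem_iff.mp hev
    exact ⟨u - T, by linarith, fun s h1 h2 => husub ⟨h1, by linarith⟩⟩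
  -- the key claim: solutions stay nonnegative slightly beyond T
  have hsubI : ∀ c : ℝ, Set.Icc T c ⊆ Set.Ici (-tau) :=
    fun c x hx => le_trans htau' (le_trans hT0 hx.1)
  have hRcI : ∀ c : ℝ, ContinuousOn R (Set.Icc T c) := fun c => hRc.mono (hsubI c)
  have hPcI : ∀ c : ℝ, ContinuousOn P2 (Set.Icc T c) := fun c => hPc.mono (hsubI c)
  have hRd : ∀ c : ℝ, ∀ t ∈ Set.Ioo T c, HasDerivAt R
      (R t * (1 - R t / K) - b * R t * P2 t / (1 + R t)) t :=
    fun c t ht => hR t (lt_of_le_of_lt hT0 ht.1)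
  have hPd : ∀ c : ℝ, ∀ t ∈ Set.Ioo T c, HasDerivAt P2
      (-mu * P2 t + b * Real.exp (-mu1 * tau) * R (t - tau) * P2 (t - tau)
        / (1 + R (t - tau))) t :=
    fun c t ht => hP t (lt_of_le_of_lt hT0 ht.1)
  -- if the delay is positive, the delayed feeding term is nonnegative close to T
  have hbndτ : ∀ d : ℝ, d ≤ tau → ∀ t ∈ Set.Ioo T (T + d),
      -mu * P2 t ≤ -mu * P2 t + b * Real.exp (-mu1 * tau) * R (t - tau) * P2 (t - tau)
        / (1 + R (t - tau)) := by
    intro d hd t ht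
    have h1 : -tau ≤ t - tau := by linarith [ht.1]
    have h2 : t - tau ≤ T := by linarith [ht.2]
    obtain ⟨hRnn', hPnn'⟩ := hnnT (t - tau) h1 h2
    have hterm : 0 ≤ b * Real.exp (-mu1 * tau) * R (t - tau) * P2 (t - tau)
        / (1 + R (t - tau)) :=
      div_nonneg (mul_nonneg (mul_nonneg (mul_nonneg hb.le (Real.exp_pos _).le) hRnn') hPnn')
        (by linarith)
    linarith
  have claim : ∃ δ > (0:ℝ), ∀ s, T ≤ s → s < T + δ → 0 ≤ R s ∧ 0 ≤ P2 s := by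
    obtain ⟨δ1, hδ1, hR1⟩ := hcont_right R hRc (1/2) (by norm_num)
    obtain ⟨δ2, hδ2, hP1⟩ := hcont_right P2 hPc 1 one_pos
    rcases eq_or_lt_of_le hRT with hRT0 | hRTpos
    -- Case A : R T = 0
    · set C : ℝ := 1 + 1/(2*K) + 2*b*(P2 T + 1) with hCdef
      set δ0 : ℝ := min δ1 δ2 with hδ0
      have hδ0pos : 0 < δ0 := lt_min hδ1 hδ2
      have hfacts : ∀ t, T ≤ t → t < T + δ0 →
          |R t| < 1/2 ∧ 1/2 < 1 + R t ∧ |P2 t| ≤ P2 T + 1 := by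
        intro t h1 h2
        have hr := hR1 t h1 (by linarith [min_le_left δ1 δ2])
        have hp := hP1 t h1 (by linarith [min_le_right δ1 δ2])
        rw [← hRT0, sub_zero] at hr
        have habs := abs_lt.mp hr
        refine ⟨hr, by linarith [habs.1], ?_⟩
        have h3 := abs_sub_abs_le_abs_sub (P2 t) (P2 T)
        rw [abs_of_nonneg hPT] at h3
        linarith
      -- Grönwall: R ≡ 0 on [T, T + δ0/2]
      have hRzero : ∀ t ∈ Set.Icc T (T + δ0/2), R t = 0 := by
        apply gronwall_zero' (C := C)
          (f' := fun t => R t * (1 - R t / K) - b * R t * P2 t / (1 + R t))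
          (by positivity) (hRcI _) (hRd _) ?_ hRT0.symm
        intro t ht
        show |R t * (1 - R t / K) - b * R t * P2 t / (1 + R t)| ≤ C * |R t|
        obtain ⟨hr, h1R, hp⟩ := hfacts t ht.1.le (by linarith [ht.2])
        have e1 : R t * (1 - R t / K) - b * R t * P2 t / (1 + R t)
            = R t * ((1 - R t / K) - b * P2 t / (1 + R t)) := by
          ring
        rw [e1, abs_mul, mul_comm]
        apply mul_le_mul_of_nonneg_right _ (abs_nonneg _)
        have habs := abs_lt.mp hr
        have habs1 : |1 - R t / K| ≤ 1 + 1/(2*K) := by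
          have h5 : R t / K < 1/(2*K) := by
            rw [div_lt_div_iff₀ hK (by positivity)]
            nlinarith
          have h6 : -(1/(2*K)) < R t / K := by
            rw [neg_lt, ← neg_div, div_lt_div_iff₀ hK (by positivity)]
            nlinarith
          rw [abs_le]
          constructor <;> [linarith; linarith]
        have habs2 : |b * P2 t / (1 + R t)| ≤ 2*b*(P2 T + 1) := by
          rw [abs_div, abs_mul, abs_of_pos hb,
            abs_of_pos (by linarith : (0:ℝ) < 1 + R t),
            div_le_iff₀ (by linarith : (0:ℝ) < 1 + R t)]
          nlinarith [mul_le_mul_of_nonneg_left hp hb.le,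
            mul_nonneg (mul_nonneg (by linarith : (0:ℝ) ≤ 2*b)
              (by linarith : (0:ℝ) ≤ P2 T + 1)) (by linarith : (0:ℝ) ≤ 1 + R t - 1/2)]
        calc |1 - R t / K - b * P2 t / (1 + R t)|
            ≤ |1 - R t / K| + |b * P2 t / (1 + R t)| := abs_sub _ _
          _ ≤ C := by rw [hCdef]; linarith
      rcases eq_or_lt_of_le htau with htau0 | htaupos
      · -- tau = 0
        subst htau0
        refine ⟨δ0/2, by linarith, fun s hs1 hs2 => ?_⟩
        have hRz := hRzero s ⟨hs1, by linarith⟩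
        refine ⟨le_of_eq hRz.symm, ?_⟩
        refine nonneg_of_deriv_ge_neg_mul (mu := mu) (hPcI _) (hPd (T + δ0/2)) ?_ hPT s ⟨hs1, by linarith⟩
        intro t ht
        show -mu * P2 t ≤ -mu * P2 t + b * Real.exp (-mu1 * 0) * R (t - 0) * P2 (t - 0)
          / (1 + R (t - 0))
        have hRz' : R (t - 0) = 0 := by
          rw [sub_zero]; exact hRzero t ⟨ht.1.le, ht.2.le⟩
        rw [hRz']
        simp
      · -- tau > 0
        have hδ'pos : 0 < min (δ0/2) tau := lt_min (by linarith) htaupos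
        refine ⟨min (δ0/2) tau, hδ'pos, fun s hs1 hs2 => ?_⟩
        have hRz := hRzero s ⟨hs1, by linarith [min_le_left (δ0/2) tau]⟩
        refine ⟨le_of_eq hRz.symm, ?_⟩
        exact nonneg_of_deriv_ge_neg_mul (mu := mu) (hPcI _) (hPd (T + min (δ0/2) tau))
          (hbndτ _ (min_le_right _ _)) hPT s ⟨hs1, hs2.le⟩
    -- Case B : R T > 0
    · obtain ⟨δ3, hδ3, hR3⟩ := hcont_right R hRc (R T) hRTpos
      have hRpos : ∀ s, T ≤ s → s < T + δ3 → 0 < R s := by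
        intro s h1 h2
        have := (abs_lt.mp (hR3 s h1 h2)).1
        linarith
      rcases eq_or_lt_of_le hPT with hPT0 | hPTpos
      · -- P2 T = 0
        rcases eq_or_lt_of_le htau with htau0 | htaupos
        · -- tau = 0 : Grönwall on P2
          subst htau0
          have hPzero : ∀ t ∈ Set.Icc T (T + δ3/2), P2 t = 0 := by
            apply gronwall_zero' (C := mu + b)
              (f' := fun t => -mu * P2 t + b * Real.exp (-mu1 * 0) * R (t - 0) * P2 (t - 0)
                / (1 + R (t - 0)))
              (by linarith) (hPcI _) (hPd _) ?_ hPT0.symm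
            intro t ht
            show |-mu * P2 t + b * Real.exp (-mu1 * 0) * R (t - 0) * P2 (t - 0)
              / (1 + R (t - 0))| ≤ (mu + b) * |P2 t|
            have hRt : 0 < R t := hRpos t ht.1.le (by linarith [ht.2])
            have e2 : -mu * P2 t + b * Real.exp (-mu1 * 0) * R (t - 0) * P2 (t - 0)
                / (1 + R (t - 0)) = P2 t * (b * R t / (1 + R t) - mu) := by
              rw [sub_zero, mul_zero, Real.exp_zero]
              ring
            rw [e2, abs_mul, mul_comm]
            apply mul_le_mul_of_nonneg_right _ (abs_nonneg _)
            have hx0 : 0 ≤ b * R t / (1 + R t) :=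
              div_nonneg (mul_nonneg hb.le hRt.le) (by linarith)
            have hx1 : b * R t / (1 + R t) ≤ b := by
              rw [div_le_iff₀ (by linarith)]
              nlinarith
            rw [abs_le]
            constructor <;> [linarith; linarith]
          refine ⟨δ3/2, by linarith, fun s hs1 hs2 => ?_⟩
          exact ⟨(hRpos s hs1 (by linarith)).le,
            le_of_eq (hPzero s ⟨hs1, by linarith⟩).symm⟩
        · -- tau > 0
          have hδ''pos : 0 < min (δ3/2) tau := lt_min (by linarith) htaupos
          refine ⟨min (δ3/2) tau, hδ''pos, fun s hs1 hs2 => ?_⟩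
          refine ⟨(hRpos s hs1 (by linarith [min_le_left (δ3/2) tau])).le, ?_⟩
          exact nonneg_of_deriv_ge_neg_mul (mu := mu) (hPcI _) (hPd (T + min (δ3/2) tau))
            (hbndτ _ (min_le_right _ _)) hPT s ⟨hs1, hs2.le⟩
      · -- both positive
        obtain ⟨δ4, hδ4, hP4⟩ := hcont_right P2 hPc (P2 T) hPTpos
        refine ⟨min δ3 δ4, lt_min hδ3 hδ4, fun s hs1 hs2 => ?_⟩
        have h1 := hRpos s hs1 (by linarith [min_le_left δ3 δ4])
        have h2 := (abs_lt.mp (hP4 s hs1 (by linarith [min_le_right δ3 δ4]))).1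
        exact ⟨h1.le, by linarith⟩
  obtain ⟨δ, hδ, hgood⟩ := claim
  obtain ⟨s, hsS, hslt⟩ := exists_lt_of_csInf_lt hSne (show sInf S < T + δ by
    rw [← hT]; linarith)
  obtain ⟨hs1, hs2⟩ := hgood s (hTlb s hsS) hslt
  rcases hsS.2 with h | h <;> linarith
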